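/- Let p be a rational prime and K a number field with ring of integers Z_K. For a positive integer f, let P_f be the number of distinct prime ideals of Z_K lying above p with residue degree f, and let N_f be the number of monic irreducible polynomials of degree f in 𝔽_p[x]. If P_f > N_f for some positive integer f, then for every θ ∈ Z_K that generates K over ℚ, the prime p divides the index (Z_K : ℤ[θ]). -/
import Mathlib


open Polynomial NumberField

/-- If `p` does not divide the index of `ℤ[θ]` in `R`, then `ℤ[θ]` surjects onto `R ⧸ I`
for any ideal `I` containing `p`. -/
lemma aux_surj_onto_quotient {R : Type*} [CommRing R] (p : ℕ) (hp : p.Prime) (θ : R)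
    (hnd : ¬ p ∣ ((Algebra.adjoin ℤ {θ}).toSubring.toAddSubgroup.index))
    (I : Ideal R) (hpI : (p : R) ∈ I) (y : R ⧸ I) :
    ∃ a ∈ Algebra.adjoin ℤ {θ}, Ideal.Quotient.mk I a = y := by
  set A := (Algebra.adjoin ℤ {θ}).toSubring.toAddSubgroup with hA
  set C := A ⊔ I.toAddSubgroup with hCdef
  have hC : ∀ x : R, x ∈ C := by
    intro x
    have h2 : p • ((x : R ⧸ C)) = 0 := by
      have hmem : ((p • x : R) : R ⧸ C) = 0 := by
        rw [QuotientAddGroup.eq_zero_iff]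
        apply AddSubgroup.mem_sup_right
        show p • x ∈ I.toAddSubgroup
        simpa [nsmul_eq_mul] using I.mul_mem_right x hpI
      have h3 := map_nsmul (QuotientAddGroup.mk' C) p x
      simp only [QuotientAddGroup.mk'_apply] at h3
      rw [← h3]
      exact hmem
    have hord : addOrderOf ((x : R ⧸ C)) ∣ p := addOrderOf_dvd_of_nsmul_eq_zero h2
    rcases (hp.eq_one_or_self_of_dvd _ hord) with h | h
    · have : ((x : R ⧸ C)) = 0 := by
        rwa [AddMonoid.addOrderOf_eq_one_iff] at h
      rwa [QuotientAddGroup.eq_zero_iff] at this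
    · exfalso
      apply hnd
      have h1 : addOrderOf ((x : R ⧸ C)) ∣ C.index := addOrderOf_dvd_natCard _
      have h2 : C.index ∣ A.index := AddSubgroup.index_dvd_of_le le_sup_left
      rw [h] at h1
      exact h1.trans h2
  obtain ⟨x, hx⟩ := Ideal.Quotient.mk_surjective y
  obtain ⟨a, ha, b, hb, hab⟩ := AddSubgroup.mem_sup.mp (hC x)
  refine ⟨a, ha, ?_⟩
  rw [← hx, ← hab, map_add]
  have : Ideal.Quotient.mk I b = 0 := Ideal.Quotient.eq_zero_iff_mem.mpr hb
  rw [this, add_zero]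

/-- A nontrivial ring in which `p` vanishes has characteristic `p`. -/
lemma aux_charP {R : Type*} [NonAssocSemiring R] [Nontrivial R] (p : ℕ) (hp : p.Prime)
    (h0 : (p : R) = 0) : CharP R p := by
  have hd : ringChar R ∣ p := ringChar.dvd h0
  rcases hp.eq_one_or_self_of_dvd _ hd with h | h
  · exfalso
    have h1 : ((ringChar R : ℕ) : R) = 0 := CharP.cast_eq_zero R (ringChar R)
    rw [h, Nat.cast_one] at h1
    exact one_ne_zero h1
  · exact h ▸ ringChar.charP R

/-- Pushing an integer-polynomial evaluation through a ring hom into a `ZMod p`-algebra. -/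
lemma aux_eval (p : ℕ) {R S : Type*} [CommRing R] [CommRing S] [Algebra (ZMod p) S]
    (φ : R →+* S) (θ : R) (G : ℤ[X]) :
    φ (aeval θ G) = aeval (φ θ) (G.map (Int.castRingHom (ZMod p))) := by
  rw [aeval_def, Polynomial.hom_eval₂, aeval_def, Polynomial.eval₂_map]
  congr 1
  exact Subsingleton.elim _ _

/-- If `g` is irreducible mod `p`, `G` a lift of `g`, and the ideal `(p, G(θ))` is proper,
then it is maximal. -/
lemma aux_maximal (p : ℕ) (hp : p.Prime) {R : Type*} [CommRing R] (θ : R)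
    (hsurj : ∀ (I : Ideal R), (p : R) ∈ I → ∀ y : R ⧸ I,
      ∃ a ∈ Algebra.adjoin ℤ {θ}, Ideal.Quotient.mk I a = y)
    (g : (ZMod p)[X]) (hirr : Irreducible g) (G : ℤ[X])
    (hG : G.map (Int.castRingHom (ZMod p)) = g)
    (hne : Ideal.span {(p : R), aeval θ G} ≠ ⊤) :
    (Ideal.span {(p : R), aeval θ G}).IsMaximal := by
  haveI := Fact.mk hp
  set J := Ideal.span {(p : R), aeval θ G} with hJ
  have hpJ : (p : R) ∈ J := Ideal.subset_span (by simp)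
  have hGJ : aeval θ G ∈ J := Ideal.subset_span (by simp)
  haveI : Nontrivial (R ⧸ J) := Ideal.Quotient.nontrivial_iff.mpr hne
  have hp0 : (p : R ⧸ J) = 0 := by
    rw [← map_natCast (Ideal.Quotient.mk J)]
    exact Ideal.Quotient.eq_zero_iff_mem.mpr hpJ
  haveI : CharP (R ⧸ J) p := aux_charP p hp hp0
  letI : Algebra (ZMod p) (R ⧸ J) := ZMod.algebra _ p
  -- the evaluation map from (ZMod p)[X]
  let χ : (ZMod p)[X] →+* R ⧸ J :=
    Polynomial.eval₂RingHom (algebraMap (ZMod p) (R ⧸ J)) (Ideal.Quotient.mk J θ)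
  have hχ : ∀ F : ℤ[X], χ (F.map (Int.castRingHom (ZMod p)))
      = Ideal.Quotient.mk J (aeval θ F) := by
    intro F
    rw [aux_eval p (Ideal.Quotient.mk J) θ F]
    simp [χ, aeval_def]
  have hχsurj : Function.Surjective χ := by
    intro y
    obtain ⟨a, ha, hay⟩ := hsurj J hpJ y
    rw [Algebra.adjoin_singleton_eq_range_aeval] at ha
    obtain ⟨F, hF⟩ := ha
    exact ⟨F.map (Int.castRingHom (ZMod p)), by rw [hχ F, show (aeval θ) F = a from hF, hay]⟩
  have hχg : χ g = 0 := by
    rw [← hG, hχ G]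
    exact Ideal.Quotient.eq_zero_iff_mem.mpr hGJ
  -- factor through the field (ZMod p)[X] ⧸ (g)
  haveI hmax : (Ideal.span {g}).IsMaximal := PrincipalIdealRing.isMaximal_of_irreducible hirr
  letI : Field ((ZMod p)[X] ⧸ Ideal.span {g}) := Ideal.Quotient.field _
  have hker : ∀ a ∈ Ideal.span {g}, χ a = 0 := by
    intro a ha
    obtain ⟨c, hc⟩ := Ideal.mem_span_singleton'.mp ha
    rw [← hc, map_mul, hχg, mul_zero]
  let ψ : ((ZMod p)[X] ⧸ Ideal.span {g}) →+* R ⧸ J := Ideal.Quotient.lift _ χ hker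
  have hψsurj : Function.Surjective ψ := by
    intro y
    obtain ⟨a, ha⟩ := hχsurj y
    exact ⟨Ideal.Quotient.mk _ a, ha⟩
  have hψinj : Function.Injective ψ := ψ.injective
  let e : ((ZMod p)[X] ⧸ Ideal.span {g}) ≃+* R ⧸ J :=
    RingEquiv.ofBijective ψ ⟨hψinj, hψsurj⟩
  apply Ideal.Quotient.maximal_of_isField
  -- transfer IsField along e
  refine ⟨exists_pair_ne _, mul_comm, ?_⟩
  intro a ha
  obtain ⟨x, rfl⟩ := e.surjective a
  have hx : x ≠ 0 := fun h => ha (by rw [h, map_zero])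
  exact ⟨e x⁻¹, by rw [← map_mul, mul_inv_cancel₀ hx, map_one]⟩


/-- The residue-field minimal polynomial of `θ` at a maximal ideal `P` of norm `p ^ f`,
assuming `ℤ[θ]` surjects onto the residue field. -/
lemma aux_key {R : Type*} [CommRing R] (p f : ℕ) (hp : p.Prime) (θ : R) (P : Ideal R)
    [hPmax : P.IsMaximal] (hpP : (p : R) ∈ P) (hcard : Nat.card (R ⧸ P) = p ^ f)
    (hsurj : ∀ y : R ⧸ P, ∃ a ∈ Algebra.adjoin ℤ {θ}, Ideal.Quotient.mk P a = y) :
    ∃ g : (ZMod p)[X], (g.Monic ∧ Irreducible g ∧ g.natDegree = f) ∧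
      ∀ G : ℤ[X], G.map (Int.castRingHom (ZMod p)) = g → aeval θ G ∈ P := by
  haveI := Fact.mk hp
  letI : Field (R ⧸ P) := Ideal.Quotient.field P
  have hp0 : (p : R ⧸ P) = 0 := by
    rw [← map_natCast (Ideal.Quotient.mk P)]
    exact Ideal.Quotient.eq_zero_iff_mem.mpr hpP
  haveI : CharP (R ⧸ P) p := aux_charP p hp hp0
  letI : Algebra (ZMod p) (R ⧸ P) := ZMod.algebra _ p
  haveI : Finite (R ⧸ P) := Nat.finite_of_card_ne_zero (by
    rw [hcard]; exact pow_ne_zero _ hp.ne_zero)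
  haveI : Fintype (R ⧸ P) := Fintype.ofFinite _
  set θb := Ideal.Quotient.mk P θ with hθb
  have hadj : Algebra.adjoin (ZMod p) {θb} = ⊤ := by
    rw [eq_top_iff]
    intro y _
    obtain ⟨a, ha, hay⟩ := hsurj y
    rw [Algebra.adjoin_singleton_eq_range_aeval] at ha
    obtain ⟨F, hF⟩ := ha
    rw [Algebra.adjoin_singleton_eq_range_aeval]
    refine ⟨F.map (Int.castRingHom (ZMod p)), ?_⟩
    show aeval θb (F.map (Int.castRingHom (ZMod p))) = y
    rw [← aux_eval p (Ideal.Quotient.mk P) θ F, show (aeval θ) F = a from hF, hay]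
  have hint : IsIntegral (ZMod p) θb := by
    haveI : Module.Finite (ZMod p) (R ⧸ P) := Module.Finite.of_finite
    exact IsIntegral.of_finite _ _
  refine ⟨minpoly (ZMod p) θb, ⟨minpoly.monic hint, minpoly.irreducible hint, ?_⟩, ?_⟩
  · have hIF : IntermediateField.adjoin (ZMod p) {θb} = ⊤ := by
      rw [eq_top_iff]
      intro y _
      have : y ∈ Algebra.adjoin (ZMod p) {θb} := by rw [hadj]; trivial
      exact IntermediateField.algebra_adjoin_le_adjoin (ZMod p) {θb} this
    have h1 : Module.finrank (ZMod p) (IntermediateField.adjoin (ZMod p) {θb})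
        = (minpoly (ZMod p) θb).natDegree := IntermediateField.adjoin.finrank hint
    rw [hIF] at h1
    have h2 : Module.finrank (ZMod p) ((⊤ : IntermediateField (ZMod p) (R ⧸ P)))
        = Module.finrank (ZMod p) (R ⧸ P) := IntermediateField.finrank_top'
    have h3 : Fintype.card (R ⧸ P) = p ^ Module.finrank (ZMod p) (R ⧸ P) := by
      have := Module.card_eq_pow_finrank (K := ZMod p) (V := R ⧸ P)
      rwa [ZMod.card] at this
    have h4 : Fintype.card (R ⧸ P) = p ^ f := by
      rw [← Nat.card_eq_fintype_card, hcard]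
    have h5 : p ^ Module.finrank (ZMod p) (R ⧸ P) = p ^ f := by
      rw [← h3, h4]
    have := Nat.pow_right_injective hp.two_le h5
    rw [← h1, h2, this]
  · intro G hG
    rw [← Ideal.Quotient.eq_zero_iff_mem]
    rw [aux_eval p (Ideal.Quotient.mk P) θ G, hG]
    exact minpoly.aeval _ _

/-- Let `p` be a rational prime and `K` a number field with ring of integers `Z_K`. For
a positive integer `f`, let `P_f` be the number of prime ideals of `Z_K` lying above `p`
with residue degree `f` (equivalently, with absolute norm `p ^ f`), and `N_f` the number
of monic irreducible polynomials of degree `f` in `𝔽_p[x]`. If `P_f > N_f` for some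
positive `f`, then for every `θ ∈ Z_K` generating `K` over `ℚ`, the prime `p` divides
the index `(Z_K : ℤ[θ])`. -/
theorem common_index_divisor_of_many_primes (p : ℕ) (hp : p.Prime)
    (K : Type*) [Field K] [NumberField K] (f : ℕ) (hf : 0 < f)
    (hgt : Nat.card {P : Ideal (𝓞 K) // P.IsPrime ∧ (p : 𝓞 K) ∈ P ∧
        Ideal.absNorm P = p ^ f}
      > Nat.card {g : (ZMod p)[X] // g.Monic ∧ Irreducible g ∧ g.natDegree = f}) :
    ∀ θ : 𝓞 K, IntermediateField.adjoin ℚ {(θ : K)} = ⊤ →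
      p ∣ ((Algebra.adjoin ℤ {θ}).toSubring.toAddSubgroup.index) := by
  intro θ hθ
  by_contra hnd
  haveI := Fact.mk hp
  haveI : NeZero p := ⟨hp.ne_zero⟩
  have hsurj := aux_surj_onto_quotient p hp θ hnd
  set S := {P : Ideal (𝓞 K) // P.IsPrime ∧ (p : 𝓞 K) ∈ P ∧ Ideal.absNorm P = p ^ f} with hS
  set T := {g : (ZMod p)[X] // g.Monic ∧ Irreducible g ∧ g.natDegree = f} with hT
  -- T is finite
  haveI : Finite T := by
    apply Finite.of_injective (fun g : T => (fun i : Fin (f + 1) => (g : (ZMod p)[X]).coeff i))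
    intro g h hgh
    apply Subtype.ext
    apply Polynomial.ext
    intro n
    rcases le_or_gt n f with hn | hn
    · exact congrFun hgh ⟨n, by omega⟩
    · rw [Polynomial.coeff_eq_zero_of_natDegree_lt (by rw [g.2.2.2]; exact hn),
        Polynomial.coeff_eq_zero_of_natDegree_lt (by rw [h.2.2.2]; exact hn)]
  -- key: each prime gives a monic irreducible polynomial of degree f
  have key : ∀ P : S, ∃ g : (ZMod p)[X], (g.Monic ∧ Irreducible g ∧ g.natDegree = f) ∧
      ∀ G : ℤ[X], G.map (Int.castRingHom (ZMod p)) = g → aeval θ G ∈ P.1 := by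
    rintro ⟨P, hPprime, hpP, hnorm⟩
    have hPne : P ≠ ⊥ := by
      intro h
      rw [h] at hpP
      have : (p : 𝓞 K) = 0 := hpP
      exact hp.ne_zero (by exact_mod_cast this)
    haveI : P.IsMaximal := hPprime.isMaximal hPne
    have hcard : Nat.card (𝓞 K ⧸ P) = p ^ f := by
      rw [← Submodule.cardQuot_apply, ← Ideal.absNorm_apply, hnorm]
    exact aux_key p f hp θ P hpP hcard (hsurj P hpP)
  choose Φ hΦ1 hΦ2 using key
  have hinj : Function.Injective (fun P : S => (⟨Φ P, hΦ1 P⟩ : T)) := by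
    intro P Q hPQ
    have hPQ' : Φ P = Φ Q := by simpa using congrArg Subtype.val hPQ
    obtain ⟨G, hG⟩ := Polynomial.map_surjective (Int.castRingHom (ZMod p)) ZMod.intCast_surjective (Φ P)
    have h1 : aeval θ G ∈ P.1 := hΦ2 P G hG
    have h2 : aeval θ G ∈ Q.1 := hΦ2 Q G (by rw [hG, hPQ'])
    set J := Ideal.span {(p : 𝓞 K), aeval θ G} with hJ
    have hJP : J ≤ P.1 := by
      rw [hJ, Ideal.span_le]
      intro x hx
      simp only [Set.mem_insert_iff, Set.mem_singleton_iff] at hx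
      rcases hx with rfl | rfl
      · exact SetLike.mem_coe.mpr P.2.2.1
      · exact SetLike.mem_coe.mpr h1
    have hJQ : J ≤ Q.1 := by
      rw [hJ, Ideal.span_le]
      intro x hx
      simp only [Set.mem_insert_iff, Set.mem_singleton_iff] at hx
      rcases hx with rfl | rfl
      · exact SetLike.mem_coe.mpr Q.2.2.1
      · exact SetLike.mem_coe.mpr h2
    have hPtop : P.1 ≠ ⊤ := P.2.1.ne_top
    have hQtop : Q.1 ≠ ⊤ := Q.2.1.ne_top
    have hJne : J ≠ ⊤ := fun h => hPtop (top_le_iff.mp (h ▸ hJP))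
    have hJmax : J.IsMaximal := aux_maximal p hp θ hsurj (Φ P) (hΦ1 P).2.1 G hG hJne
    have e1 : J = P.1 := hJmax.eq_of_le hPtop hJP
    have e2 : J = Q.1 := hJmax.eq_of_le hQtop hJQ
    exact Subtype.ext (e1 ▸ e2)
  have hle : Nat.card S ≤ Nat.card T := Nat.card_le_card_of_injective _ hinj
  omega
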